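/- arXiv:2402.14011 — 2 statements merged into one kernel-verified Lean document; each statement's English description precedes it below -/
import Mathlib

section
/- Let G be a group, K ≤ G a subgroup, and g ∈ G. Let V be a representation of K over a commutative ring R. Then the map sending f : K g K → V (supported on the double coset, left-K-equivariant in the appropriate sense) to the function h : K → V defined by h(x) = f(g x) gives an R[K]-module isomorphism between Ind_K^{K g K} V (functions on K g K that transform by V under left K-translation, with right K-action) and Ind_{K ∩ g^{-1} K g}^{K} V^{(g)}, where V^{(g)} is the K ∩ g^{-1}Kg-representation in which x acts by g x g^{-1}. -/
/-- Mackey-type isomorphism for a double coset: the map `f ↦ (x ↦ f(g·x))` is an `R`-linear,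
right-`K`-equivariant bijection from the space of functions supported on `K g K` that
transform on the left by the `K`-representation `(V, ρ)`, onto the space
`Ind_{K ∩ g⁻¹Kg}^{K} V^{(g)}`, where in `V^{(g)}` an element `c ∈ K ∩ g⁻¹Kg` acts via
`ρ(g c g⁻¹)`. -/
theorem stmt9 {R : Type*} [CommRing R] {G : Type*} [Group G] (K : Subgroup G) (g : G)
    {V : Type*} [AddCommGroup V] [Module R V] (ρ : Representation R K V) :
    let S1 : Set (G → V) := {f |
      (∀ x : G, f x ≠ 0 → ∃ k k' : K, x = (k : G) * g * (k' : G)) ∧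
      ∀ (k : K) (x : G), f ((k : G) * x) = ρ k (f x)}
    let S2 : Set (K → V) := {h |
      ∀ (c x : K) (hc : (g : G) * (c : G) * (g : G)⁻¹ ∈ K),
        h (c * x) = ρ ⟨(g : G) * (c : G) * (g : G)⁻¹, hc⟩ (h x)}
    let Φ : (G → V) → (K → V) := fun f x => f (g * (x : G))
    Set.BijOn Φ S1 S2 ∧
    (∀ f₁ f₂ : G → V, Φ (f₁ + f₂) = Φ f₁ + Φ f₂) ∧
    (∀ (r : R) (f : G → V), Φ (r • f) = r • Φ f) ∧
    (∀ (f : G → V) (k' : K), Φ (fun x => f (x * (k' : G))) = fun x => Φ f (x * k')) := by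
  classical
  intro S1 S2 Φ
  refine ⟨⟨?_, ?_, ?_⟩, ?_, ?_, ?_⟩
  · -- MapsTo
    intro f hf c x hc
    show f (g * ((c * x : K) : G)) = ρ ⟨(g : G) * c * (g : G)⁻¹, hc⟩ (f (g * (x : K)))
    have e : (g : G) * ((c * x : K) : G)
        = ((⟨(g : G) * c * (g : G)⁻¹, hc⟩ : K) : G) * (g * (x : K)) := by
      push_cast; group
    rw [e, hf.2]
  · -- InjOn
    intro f₁ h₁ f₂ h₂ hΦ
    funext x
    by_cases hx : ∃ k k' : K, x = (k : G) * g * (k' : G)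
    · obtain ⟨k, k', rfl⟩ := hx
      have e : (k : G) * g * (k' : G) = (k : G) * (g * (k' : G)) := by group
      rw [e, h₁.2, h₂.2]
      have := congrFun hΦ k'
      simp only [Φ] at this
      rw [this]
    · have z₁ : f₁ x = 0 := by by_contra h; exact hx (h₁.1 x h)
      have z₂ : f₂ x = 0 := by by_contra h; exact hx (h₂.1 x h)
      rw [z₁, z₂]
  · -- SurjOn
    intro h hh
    set f : G → V := fun x =>
      if hx : ∃ k k' : K, x = (k : G) * g * (k' : G)
      then ρ hx.choose (h hx.choose_spec.choose) else 0 with hfdef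
    have key : ∀ k k' : K, f ((k : G) * g * (k' : G)) = ρ k (h k') := by
      intro k k'
      have hx : ∃ a b : K, (k : G) * g * (k' : G) = (a : G) * g * (b : G) := ⟨k, k', rfl⟩
      set a := hx.choose with ha
      set b := hx.choose_spec.choose with hb
      have hcalc : f ((k : G) * g * (k' : G)) = ρ a (h b) := by
        rw [hfdef]; exact dif_pos hx
      rw [hcalc]
      have heq : (k : G) * g * (k' : G) = (a : G) * g * (b : G) := hx.choose_spec.choose_spec
      have h2 : g * (b : G) = (a : G)⁻¹ * (k : G) * g * (k' : G) := by
        calc g * (b : G) = (a : G)⁻¹ * ((a : G) * g * (b : G)) := by group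
          _ = (a : G)⁻¹ * ((k : G) * g * (k' : G)) := by rw [← heq]
          _ = (a : G)⁻¹ * (k : G) * g * (k' : G) := by group
      have h3 : (g : G) * ((b * k'⁻¹ : K) : G) * g⁻¹ = ((a⁻¹ * k : K) : G) := by
        push_cast
        calc g * ((b : G) * (k' : G)⁻¹) * g⁻¹
            = (g * (b : G)) * (k' : G)⁻¹ * g⁻¹ := by group
          _ = ((a : G)⁻¹ * (k : G) * g * (k' : G)) * (k' : G)⁻¹ * g⁻¹ := by rw [h2]
          _ = (a : G)⁻¹ * (k : G) := by group
      have hc : (g : G) * ((b * k'⁻¹ : K) : G) * (g : G)⁻¹ ∈ K := by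
        rw [h3]; exact (a⁻¹ * k).2
      have hvals := hh (b * k'⁻¹) k' hc
      have hbk : b * k'⁻¹ * k' = b := by group
      rw [hbk] at hvals
      have hsub : (⟨(g : G) * ((b * k'⁻¹ : K) : G) * (g : G)⁻¹, hc⟩ : K) = a⁻¹ * k :=
        Subtype.ext h3
      rw [hsub] at hvals
      rw [hvals, ← Module.End.mul_apply, ← map_mul]
      congr 1
      group
    refine ⟨f, ⟨?_, ?_⟩, ?_⟩
    · -- support
      intro x hx
      by_contra hne
      apply hx
      rw [hfdef]
      exact dif_neg hne
    · -- left equivariance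
      intro k x
      by_cases hx : ∃ a b : K, x = (a : G) * g * (b : G)
      · obtain ⟨a, b, rfl⟩ := hx
        have e : (k : G) * ((a : G) * g * (b : G)) = ((k * a : K) : G) * g * (b : G) := by
          push_cast; group
        rw [e, key, key, map_mul]
        rfl
      · have hkx : ¬ ∃ a b : K, (k : G) * x = (a : G) * g * (b : G) := by
          rintro ⟨a, b, hab⟩
          have hxeq : x = (k : G)⁻¹ * ((a : G) * g * (b : G)) := by rw [← hab]; group
          exact hx ⟨k⁻¹ * a, b, by push_cast; rw [hxeq]; group⟩
        have z1 : f ((k : G) * x) = 0 := by rw [hfdef]; exact dif_neg hkx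
        have z2 : f x = 0 := by rw [hfdef]; exact dif_neg hx
        rw [z1, z2, map_zero]
    · -- Φ f = h
      funext x
      show f (g * (x : K)) = h x
      have e : (g : G) * (x : K) = ((1 : K) : G) * g * (x : K) := by
        push_cast; group
      rw [e, key, map_one]
      rfl
  · intro f₁ f₂; rfl
  · intro r f; rfl
  · intro f k'
    funext x
    show f (g * (x : G) * (k' : G)) = f (g * ((x * k' : K) : G))
    congr 1
    push_cast
    group
end

section
/- Let F be a field and n ≥ 2. Inside F[x_1^{±1}, x_2^{±1}, ..., x_n^{±1}], for each 1 ≤ i ≤ n−1 let A_i := F[x_1^{±1},...,x_{i−1}^{±1}, x_i, (x_i x_{i+1})^{±1}, x_{i+2}^{±1},...,x_n^{±1}] be the subalgebra generated by the indicated elements and their listed inverses. Then the intersection ∩_{i=1}^{n−1} A_i equals F[y_1, y_2, ..., y_{n−1}, y_n^{±1}], where y_i = x_1 x_2 ⋯ x_i. -/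
open scoped Classical



namespace Stmt16Aux

variable {F : Type*} [Field F] {n : ℕ}

/-- `single` of a sum is a product of `single`s. -/
lemma single_add_one (a b : Fin n →₀ ℤ) :
    (AddMonoidAlgebra.single (a + b) (1 : F) : AddMonoidAlgebra F (Fin n →₀ ℤ)) =
      AddMonoidAlgebra.single a 1 * AddMonoidAlgebra.single b 1 := by
  rw [AddMonoidAlgebra.single_mul_single, one_mul]

lemma single_mem_of_closure {A : Subalgebra F (AddMonoidAlgebra F (Fin n →₀ ℤ))}
    {T : Set (Fin n →₀ ℤ)}
    (hT : ∀ ν ∈ T, AddMonoidAlgebra.single ν (1 : F) ∈ A) {μ : Fin n →₀ ℤ}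
    (hμ : μ ∈ AddSubmonoid.closure T) : AddMonoidAlgebra.single μ (1 : F) ∈ A := by
  induction hμ using AddSubmonoid.closure_induction with
  | mem ν hν => exact hT ν hν
  | zero => exact A.one_mem
  | add a b ha hb iha ihb => rw [single_add_one]; exact A.mul_mem iha ihb

/-- generic "integer multiples" membership in an additive closure. -/
lemma rep_mem_nat {T : Set (Fin n →₀ ℤ)} {f : ℤ → Fin n →₀ ℤ}
    (hadd : ∀ a b : ℤ, f (a + b) = f a + f b) (h1 : f 1 ∈ T) :
    ∀ k : ℕ, f k ∈ AddSubmonoid.closure T := by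
  have h0 : f 0 = 0 := by
    have h := hadd 0 0
    rw [add_zero] at h
    exact (left_eq_add.mp h)
  intro k
  induction k with
  | zero => simpa [h0] using (AddSubmonoid.closure T).zero_mem
  | succ k ih =>
      have : f ((k : ℤ) + 1) = f k + f 1 := hadd k 1
      rw [show ((k + 1 : ℕ) : ℤ) = (k : ℤ) + 1 by push_cast; ring, this]
      exact (AddSubmonoid.closure T).add_mem ih (AddSubmonoid.subset_closure h1)

lemma rep_mem_nonneg {T : Set (Fin n →₀ ℤ)} {f : ℤ → Fin n →₀ ℤ}
    (hadd : ∀ a b : ℤ, f (a + b) = f a + f b) (h1 : f 1 ∈ T) {m : ℤ} (hm : 0 ≤ m) :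
    f m ∈ AddSubmonoid.closure T := by
  have := rep_mem_nat hadd h1 m.toNat
  rwa [Int.toNat_of_nonneg hm] at this

lemma rep_mem {T : Set (Fin n →₀ ℤ)} {f : ℤ → Fin n →₀ ℤ}
    (hadd : ∀ a b : ℤ, f (a + b) = f a + f b) (h1 : f 1 ∈ T) (h2 : f (-1) ∈ T) (m : ℤ) :
    f m ∈ AddSubmonoid.closure T := by
  rcases le_or_gt 0 m with hm | hm
  · exact rep_mem_nonneg hadd h1 hm
  · have hadd' : ∀ a b : ℤ, (f ∘ Neg.neg) (a + b) = (f ∘ Neg.neg) a + (f ∘ Neg.neg) b := by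
      intro a b; simp only [Function.comp_apply, neg_add]; exact hadd _ _
    have := rep_mem_nonneg (f := f ∘ Neg.neg) hadd' (by simpa using h2) (m := -m) (by omega)
    simpa using this


/-- The subalgebra of the group algebra spanned by monomials with exponents in `S`. -/
noncomputable def expAlg (F : Type*) [Field F] {n : ℕ} (S : AddSubmonoid (Fin n →₀ ℤ)) :
    Subalgebra F (AddMonoidAlgebra F (Fin n →₀ ℤ)) where
  carrier := {z | ∀ μ ∈ z.coeff.support, μ ∈ S}
  add_mem' := by
    intro a b ha hb μ hμ
    rcases Finset.mem_union.1 (Finsupp.support_add hμ) with h | h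
    · exact ha μ h
    · exact hb μ h
  mul_mem' := by
    intro a b ha hb μ hμ
    have := AddMonoidAlgebra.support_coeff_mul_subset a b hμ
    rcases Finset.mem_add.1 this with ⟨x₁, hx₁, x₂, hx₂, rfl⟩
    exact S.add_mem (ha _ hx₁) (hb _ hx₂)
  algebraMap_mem' := by
    intro c μ hμ
    have : (algebraMap F (AddMonoidAlgebra F (Fin n →₀ ℤ)) c) =
        AddMonoidAlgebra.single 0 c := rfl
    rw [this] at hμ
    have := Finsupp.support_single_subset hμ
    simp only [Finset.mem_singleton] at this
    rw [this]; exact S.zero_mem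

lemma mem_expAlg {S : AddSubmonoid (Fin n →₀ ℤ)} {z : AddMonoidAlgebra F (Fin n →₀ ℤ)} :
    z ∈ expAlg F S ↔ ∀ μ ∈ z.coeff.support, μ ∈ S := Iff.rfl

lemma mem_span_of {P : (Fin n →₀ ℤ) → Prop} {z : AddMonoidAlgebra F (Fin n →₀ ℤ)}
    (hz : ∀ μ ∈ z.coeff.support, P μ) :
    z ∈ Submodule.span F {l : AddMonoidAlgebra F (Fin n →₀ ℤ) |
      ∃ μ : Fin n →₀ ℤ, P μ ∧ l = AddMonoidAlgebra.single μ 1} := by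
  have hrepr : z = ∑ μ ∈ z.coeff.support,
      (z.coeff μ) • (AddMonoidAlgebra.single μ (1 : F)) := by
    conv_lhs => rw [← AddMonoidAlgebra.sum_coeff_single z]
    rw [Finsupp.sum]
    refine Finset.sum_congr rfl fun μ hμ => ?_
    rw [AddMonoidAlgebra.smul_single, smul_eq_mul, mul_one]
  rw [hrepr]
  exact Submodule.sum_mem _ fun μ hμ =>
    Submodule.smul_mem _ _ (Submodule.subset_span ⟨μ, hz μ hμ, rfl⟩)

lemma antitone_of_local {μ : Fin n → ℤ}
    (h : ∀ (i : Fin n) (hi : (i : ℕ) + 1 < n), μ ⟨(i : ℕ) + 1, hi⟩ ≤ μ i) : Antitone μ := by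
  intro a b hab
  obtain ⟨d, hd⟩ : ∃ d : ℕ, (b : ℕ) = (a : ℕ) + d := ⟨(b : ℕ) - (a : ℕ), by omega⟩
  clear hab
  induction d generalizing b with
  | zero =>
      have : b = a := Fin.ext (by omega)
      rw [this]
  | succ d ih =>
      have hc : (a : ℕ) + d < n := by omega
      set c : Fin n := ⟨(a : ℕ) + d, hc⟩ with hcdef
      have hcn : (c : ℕ) + 1 < n := by simp [hcdef]; omega
      have h1 : μ b ≤ μ c := by
        have hb : b = ⟨(c : ℕ) + 1, hcn⟩ := Fin.ext (by simp [hcdef]; omega)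
        rw [hb]; exact h c hcn
      have h2 : μ c ≤ μ a := ih (by simp [hcdef])
      exact h1.trans h2


lemma sum_single_apply (s : Finset (Fin n)) (c : Fin n → ℤ) (k : Fin n) :
    (∑ j ∈ s, Finsupp.single j (c j)) k = if k ∈ s then c k else 0 := by
  rw [Finsupp.finset_sum_apply]
  simp only [Finsupp.single_apply]
  exact Finset.sum_ite_eq' s k c

lemma mem_closure_Ti {i i' : Fin n} (hne : i ≠ i') {μ : Fin n →₀ ℤ} (hle : μ i' ≤ μ i)
    {T : Set (Fin n →₀ ℤ)}
    (hTj : ∀ j : Fin n, j ≠ i → j ≠ i' →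
      Finsupp.single j (1 : ℤ) ∈ T ∧ Finsupp.single j (-1 : ℤ) ∈ T)
    (hTi : Finsupp.single i (1 : ℤ) ∈ T)
    (hTp : Finsupp.single i (1 : ℤ) + Finsupp.single i' (1 : ℤ) ∈ T)
    (hTm : Finsupp.single i (-1 : ℤ) + Finsupp.single i' (-1 : ℤ) ∈ T) :
    μ ∈ AddSubmonoid.closure T := by
  have hdecomp : μ = (∑ j ∈ (Finset.univ.erase i).erase i', Finsupp.single j (μ j))
      + (Finsupp.single i (μ i - μ i')
        + (Finsupp.single i (μ i') + Finsupp.single i' (μ i'))) := by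
    ext k
    rw [Finsupp.add_apply, Finsupp.add_apply, Finsupp.add_apply, sum_single_apply]
    simp only [Finsupp.single_apply]
    by_cases hki : k = i
    · subst hki
      simp only [Finset.mem_erase, Finset.mem_univ, and_true, ne_eq, not_true_eq_false,
        and_false, if_false, if_pos rfl, if_neg (Ne.symm hne), false_and]
      simp
      try ring
    · by_cases hki' : k = i'
      · subst hki'
        simp only [Finset.mem_erase, Finset.mem_univ, and_true, ne_eq, not_true_eq_false,
          false_and, if_false, if_pos rfl, if_neg hne]
        try simp
      · simp only [Finset.mem_erase, Finset.mem_univ, and_true, ne_eq,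
          if_pos (And.intro hki' hki), if_neg (Ne.symm hki), if_neg (Ne.symm hki')]
        try simp
  rw [hdecomp]
  refine (AddSubmonoid.closure T).add_mem ?_ ((AddSubmonoid.closure T).add_mem ?_ ?_)
  · refine AddSubmonoid.sum_mem _ fun j hj => ?_
    rw [Finset.mem_erase] at hj
    obtain ⟨hj1, hj2⟩ := hj
    rw [Finset.mem_erase] at hj2
    obtain ⟨hj2, -⟩ := hj2
    obtain ⟨h1, h2⟩ := hTj j hj2 hj1
    exact rep_mem (f := fun m => Finsupp.single j m)
      (fun a b => Finsupp.single_add j a b) h1 h2 (μ j)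
  · exact rep_mem_nonneg (f := fun m => Finsupp.single i m)
      (fun a b => Finsupp.single_add i a b) hTi (by omega)
  · have hadd2 : ∀ a b : ℤ, (Finsupp.single i (a + b) + Finsupp.single i' (a + b))
        = (Finsupp.single i a + Finsupp.single i' a)
          + (Finsupp.single i b + Finsupp.single i' b) := by
      intro a b
      rw [Finsupp.single_add, Finsupp.single_add]
      abel
    exact rep_mem (f := fun m => Finsupp.single i m + Finsupp.single i' m)
      hadd2 hTp hTm (μ i')

lemma tele0 (M : ℕ → ℤ) (a b : ℕ) (h : a ≤ b) :
    ∑ t ∈ Finset.Ico a b, (M t - M (t + 1)) = M a - M b := by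
  induction b, h using Nat.le_induction with
  | base => simp
  | succ b hb ih => rw [Finset.sum_Ico_succ_top hb, ih]; ring

lemma mem_closure_Ty (hn : 2 ≤ n) {μ : Fin n →₀ ℤ} (hμ : Antitone (⇑μ : Fin n → ℤ))
    {T : Set (Fin n →₀ ℤ)}
    (hTf : ∀ i : Fin n, (∑ j ∈ Finset.univ.filter (fun j : Fin n => (j : ℕ) ≤ (i : ℕ)),
      Finsupp.single j (1 : ℤ)) ∈ T)
    (hTn : (-(∑ j : Fin n, Finsupp.single j (1 : ℤ))) ∈ T) :
    μ ∈ AddSubmonoid.closure T := by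
  set c : Fin n → ℤ := fun i => if h : (i : ℕ) + 1 < n then μ i - μ ⟨(i : ℕ) + 1, h⟩ else μ i
    with hc
  have hdecomp : μ = ∑ i : Fin n,
      (∑ j ∈ Finset.univ.filter (fun j : Fin n => (j : ℕ) ≤ (i : ℕ)),
        Finsupp.single j (c i)) := by
    ext k
    rw [Finsupp.finset_sum_apply]
    have hinner : ∀ i : Fin n,
        (∑ j ∈ Finset.univ.filter (fun j : Fin n => (j : ℕ) ≤ (i : ℕ)),
          Finsupp.single j (c i)) k = if (k : ℕ) ≤ (i : ℕ) then c i else 0 := by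
      intro i
      rw [sum_single_apply]
      simp [Finset.mem_filter]
    rw [Finset.sum_congr rfl fun i _ => hinner i]
    -- now a telescoping sum over Fin n
    set C : ℕ → ℤ := fun t => if ht : t < n then c ⟨t, ht⟩ else 0 with hC
    set M : ℕ → ℤ := fun t => if ht : t < n then μ ⟨t, ht⟩ else 0 with hM
    have h1 : ∀ i : Fin n, (if (k : ℕ) ≤ (i : ℕ) then c i else 0)
        = (fun t => if (k : ℕ) ≤ t then C t else 0) (i : ℕ) := by
      intro i
      simp only [hC, i.isLt, dif_pos, Fin.eta]
    rw [Finset.sum_congr rfl fun i _ => h1 i,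
      Fin.sum_univ_eq_sum_range (fun t => if (k : ℕ) ≤ t then C t else 0) n]
    have h2 : ∑ t ∈ Finset.range n, (if (k : ℕ) ≤ t then C t else 0)
        = ∑ t ∈ (Finset.range n).filter (fun t => (k : ℕ) ≤ t), C t :=
      (Finset.sum_filter _ _).symm
    have h3 : (Finset.range n).filter (fun t => (k : ℕ) ≤ t) = Finset.Ico (k : ℕ) n := by
      ext t; simp [Finset.mem_Ico]; omega
    rw [h2, h3]
    have h4 : Finset.Ico (k : ℕ) n = Finset.Ico (k : ℕ) ((n - 1) + 1) := by congr 1; omega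
    have hk1 : (k : ℕ) ≤ n - 1 := by have := k.isLt; omega
    rw [h4, Finset.sum_Ico_succ_top hk1]
    have h5 : ∀ t ∈ Finset.Ico (k : ℕ) (n - 1), C t = M t - M (t + 1) := by
      intro t ht
      obtain ⟨ht1, ht2⟩ := Finset.mem_Ico.1 ht
      have htn : t < n := by omega
      have htn1 : t + 1 < n := by omega
      simp only [hC, hM, hc, dif_pos htn, dif_pos htn1]
    rw [Finset.sum_congr rfl h5, tele0 M _ _ hk1]
    have hlast : C (n - 1) = M (n - 1) := by
      have hl : n - 1 < n := by omega
      have hl2 : ¬ ((n - 1) + 1 < n) := by omega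
      simp only [hC, hM, hc, dif_pos hl, dif_neg hl2]
    have hMk : M (k : ℕ) = μ k := by simp only [hM, k.isLt, dif_pos, Fin.eta]
    rw [hlast, hMk]
    ring
  rw [hdecomp]
  refine AddSubmonoid.sum_mem _ fun i _ => ?_
  have hadd : ∀ a b : ℤ,
      (∑ j ∈ Finset.univ.filter (fun j : Fin n => (j : ℕ) ≤ (i : ℕ)),
        Finsupp.single j (a + b))
      = (∑ j ∈ Finset.univ.filter (fun j : Fin n => (j : ℕ) ≤ (i : ℕ)),
          Finsupp.single j a)
        + (∑ j ∈ Finset.univ.filter (fun j : Fin n => (j : ℕ) ≤ (i : ℕ)),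
          Finsupp.single j b) := by
    intro a b
    rw [← Finset.sum_add_distrib]
    exact Finset.sum_congr rfl fun j _ => Finsupp.single_add j a b
  by_cases hi : (i : ℕ) + 1 < n
  · have hci : 0 ≤ c i := by
      have hle : μ ⟨(i : ℕ) + 1, hi⟩ ≤ μ i := hμ (Fin.le_def.mpr (by simp))
      simp only [hc, dif_pos hi]
      omega
    exact rep_mem_nonneg (f := fun m => ∑ j ∈ Finset.univ.filter
      (fun j : Fin n => (j : ℕ) ≤ (i : ℕ)), Finsupp.single j m) hadd (hTf i) hci
  · have hfilter : Finset.univ.filter (fun j : Fin n => (j : ℕ) ≤ (i : ℕ)) = Finset.univ := by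
      ext j
      simp only [Finset.mem_filter, Finset.mem_univ, true_and, iff_true]
      have := j.isLt; have := i.isLt; omega
    have hneg : (∑ j ∈ Finset.univ.filter (fun j : Fin n => (j : ℕ) ≤ (i : ℕ)),
        Finsupp.single j (-1 : ℤ)) = -(∑ j : Fin n, Finsupp.single j (1 : ℤ)) := by
      rw [hfilter, ← Finset.sum_neg_distrib]
      exact Finset.sum_congr rfl fun j _ => Finsupp.single_neg j 1
    have hTn' : (∑ j ∈ Finset.univ.filter (fun j : Fin n => (j : ℕ) ≤ (i : ℕ)),
        Finsupp.single j (-1 : ℤ)) ∈ T := by rw [hneg]; exact hTn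
    exact rep_mem (f := fun m => ∑ j ∈ Finset.univ.filter
      (fun j : Fin n => (j : ℕ) ≤ (i : ℕ)), Finsupp.single j m) hadd (hTf i) hTn' (c i)


lemma single_mem_expAlg {S : AddSubmonoid (Fin n →₀ ℤ)} {ν : Fin n →₀ ℤ} {cF : F}
    (hν : ν ∈ S) : AddMonoidAlgebra.single ν cF ∈ expAlg F S := by
  intro μ hμ
  have h := Finsupp.support_single_subset hμ
  simp only [Finset.mem_singleton] at h
  rwa [h]

lemma fexp_apply (i k : Fin n) :
    (∑ j ∈ Finset.univ.filter (fun j : Fin n => (j : ℕ) ≤ (i : ℕ)),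
      Finsupp.single j (1 : ℤ)) k = if (k : ℕ) ≤ (i : ℕ) then 1 else 0 := by
  rw [Finsupp.finset_sum_apply]
  simp only [Finsupp.single_apply]
  rw [Finset.sum_ite_eq' _ k (fun _ => (1 : ℤ))]
  simp [Finset.mem_filter]

lemma antitone_fexp (i : Fin n) :
    Antitone (⇑(∑ j ∈ Finset.univ.filter (fun j : Fin n => (j : ℕ) ≤ (i : ℕ)),
      Finsupp.single j (1 : ℤ)) : Fin n → ℤ) := by
  intro a b hab
  rw [fexp_apply, fexp_apply]
  have := Fin.le_def.mp hab
  split_ifs <;> omega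

lemma neg_tot_apply (k : Fin n) :
    (-(∑ j : Fin n, Finsupp.single j (1 : ℤ))) k = -1 := by
  rw [Finsupp.neg_apply]
  have : (∑ j : Fin n, Finsupp.single j (1 : ℤ)) k = 1 := by
    rw [Finsupp.finset_sum_apply]
    simp only [Finsupp.single_apply]
    rw [Finset.sum_ite_eq' _ k (fun _ => (1 : ℤ))]
    simp
  rw [this]

lemma antitone_neg_tot :
    Antitone (⇑(-(∑ j : Fin n, Finsupp.single j (1 : ℤ))) : Fin n → ℤ) := by
  intro a b _
  rw [neg_tot_apply, neg_tot_apply]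

/-- The antitone exponents form an additive submonoid. -/
noncomputable def Santi (n : ℕ) : AddSubmonoid (Fin n →₀ ℤ) where
  carrier := {ν | Antitone (⇑ν : Fin n → ℤ)}
  zero_mem' := by intro a b _; simp
  add_mem' := by
    intro a b ha hb j k hjk
    simp only [Finsupp.coe_add, Pi.add_apply]
    exact add_le_add (ha hjk) (hb hjk)


lemma part1 (z : AddMonoidAlgebra F (Fin n →₀ ℤ)) :
    (∀ (i : Fin n) (h : (i : ℕ) + 1 < n), z ∈ Algebra.adjoin F
      (({l : AddMonoidAlgebra F (Fin n →₀ ℤ) | ∃ j : Fin n, j ≠ i ∧ j ≠ ⟨(i : ℕ) + 1, h⟩ ∧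
          (l = AddMonoidAlgebra.single (Finsupp.single j (1 : ℤ)) (1 : F) ∨
           l = AddMonoidAlgebra.single (Finsupp.single j (-1 : ℤ)) (1 : F))} ∪
        {AddMonoidAlgebra.single (Finsupp.single i (1 : ℤ)) (1 : F)}) ∪
        {AddMonoidAlgebra.single (Finsupp.single i (1 : ℤ)) (1 : F) *
           AddMonoidAlgebra.single (Finsupp.single ⟨(i : ℕ) + 1, h⟩ (1 : ℤ)) (1 : F),
         AddMonoidAlgebra.single (Finsupp.single i (-1 : ℤ)) (1 : F) *
           AddMonoidAlgebra.single (Finsupp.single ⟨(i : ℕ) + 1, h⟩ (-1 : ℤ)) (1 : F)})) ↔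
    z ∈ Submodule.span F {l : AddMonoidAlgebra F (Fin n →₀ ℤ) |
      ∃ μ : Fin n →₀ ℤ, Antitone (⇑μ : Fin n → ℤ) ∧ l = AddMonoidAlgebra.single μ 1} := by
  constructor
  · intro hz
    have key : ∀ (i : Fin n) (h : (i : ℕ) + 1 < n),
        ∀ μ ∈ z.coeff.support, μ ⟨(i : ℕ) + 1, h⟩ ≤ μ i := by
      intro i h
      set i' : Fin n := ⟨(i : ℕ) + 1, h⟩ with hi'
      have hne : i ≠ i' := Fin.ne_of_val_ne (by simp [hi'])
      let S : AddSubmonoid (Fin n →₀ ℤ) :=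
        { carrier := {ν | ν i' ≤ ν i}
          zero_mem' := by simp
          add_mem' := by
            intro a b ha hb
            simp only [Set.mem_setOf_eq, Finsupp.add_apply] at *
            exact add_le_add ha hb }
      have hA : Algebra.adjoin F
          (({l : AddMonoidAlgebra F (Fin n →₀ ℤ) | ∃ j : Fin n, j ≠ i ∧ j ≠ i' ∧
              (l = AddMonoidAlgebra.single (Finsupp.single j (1 : ℤ)) (1 : F) ∨
               l = AddMonoidAlgebra.single (Finsupp.single j (-1 : ℤ)) (1 : F))} ∪
            {AddMonoidAlgebra.single (Finsupp.single i (1 : ℤ)) (1 : F)}) ∪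
            {AddMonoidAlgebra.single (Finsupp.single i (1 : ℤ)) (1 : F) *
               AddMonoidAlgebra.single (Finsupp.single i' (1 : ℤ)) (1 : F),
             AddMonoidAlgebra.single (Finsupp.single i (-1 : ℤ)) (1 : F) *
               AddMonoidAlgebra.single (Finsupp.single i' (-1 : ℤ)) (1 : F)})
          ≤ expAlg F S := by
        have hmem : ∀ ν : Fin n →₀ ℤ, ν i' ≤ ν i → ν ∈ S := fun ν hν => hν
        apply Algebra.adjoin_le
        rintro l ((⟨j, hj1, hj2, hj3 | hj3⟩ | hl) | (hl | hl))
        · subst hj3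
          refine single_mem_expAlg (hmem _ ?_)
          simp [Finsupp.single_apply, hj1, hj2]
        · subst hj3
          refine single_mem_expAlg (hmem _ ?_)
          simp [Finsupp.single_apply, hj1, hj2]
        · rw [Set.mem_singleton_iff] at hl
          subst hl
          refine single_mem_expAlg (hmem _ ?_)
          simp [Finsupp.single_apply, hne]
        · subst hl
          rw [AddMonoidAlgebra.single_mul_single, one_mul]
          refine single_mem_expAlg (hmem _ ?_)
          simp [Finsupp.add_apply, Finsupp.single_apply, hne, Ne.symm hne]
        · rw [Set.mem_singleton_iff] at hl
          subst hl
          rw [AddMonoidAlgebra.single_mul_single, one_mul]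
          refine single_mem_expAlg (hmem _ ?_)
          simp [Finsupp.add_apply, Finsupp.single_apply, hne, Ne.symm hne]
      exact fun μ hμ => hA (hz i h) μ hμ
    refine mem_span_of (P := fun μ => Antitone (⇑μ : Fin n → ℤ)) fun μ hμ => ?_
    exact antitone_of_local fun i hi => key i hi μ hμ
  · intro hz i h
    set i' : Fin n := ⟨(i : ℕ) + 1, h⟩ with hi'
    have hne : i ≠ i' := Fin.ne_of_val_ne (by simp [hi'])
    have hspan : Submodule.span F {l : AddMonoidAlgebra F (Fin n →₀ ℤ) |
        ∃ μ : Fin n →₀ ℤ, Antitone (⇑μ : Fin n → ℤ) ∧ l = AddMonoidAlgebra.single μ 1}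
        ≤ Subalgebra.toSubmodule (Algebra.adjoin F
          (({l : AddMonoidAlgebra F (Fin n →₀ ℤ) | ∃ j : Fin n, j ≠ i ∧ j ≠ i' ∧
              (l = AddMonoidAlgebra.single (Finsupp.single j (1 : ℤ)) (1 : F) ∨
               l = AddMonoidAlgebra.single (Finsupp.single j (-1 : ℤ)) (1 : F))} ∪
            {AddMonoidAlgebra.single (Finsupp.single i (1 : ℤ)) (1 : F)}) ∪
            {AddMonoidAlgebra.single (Finsupp.single i (1 : ℤ)) (1 : F) *
               AddMonoidAlgebra.single (Finsupp.single i' (1 : ℤ)) (1 : F),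
             AddMonoidAlgebra.single (Finsupp.single i (-1 : ℤ)) (1 : F) *
               AddMonoidAlgebra.single (Finsupp.single i' (-1 : ℤ)) (1 : F)})) := by
      rw [Submodule.span_le]
      rintro l ⟨μ, hanti, rfl⟩
      refine single_mem_of_closure (T :=
        {ν : Fin n →₀ ℤ | ∃ j : Fin n, j ≠ i ∧ j ≠ i' ∧
          (ν = Finsupp.single j (1 : ℤ) ∨ ν = Finsupp.single j (-1 : ℤ))} ∪
        {Finsupp.single i (1 : ℤ)} ∪
        {Finsupp.single i (1 : ℤ) + Finsupp.single i' (1 : ℤ),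
         Finsupp.single i (-1 : ℤ) + Finsupp.single i' (-1 : ℤ)}) ?_ ?_
      · rintro ν ((⟨j, hj1, hj2, rfl | rfl⟩ | hν) | (hν | hν))
        · exact Algebra.subset_adjoin (Or.inl (Or.inl ⟨j, hj1, hj2, Or.inl rfl⟩))
        · exact Algebra.subset_adjoin (Or.inl (Or.inl ⟨j, hj1, hj2, Or.inr rfl⟩))
        · rw [Set.mem_singleton_iff] at hν
          subst hν
          exact Algebra.subset_adjoin (Or.inl (Or.inr rfl))
        · subst hν
          rw [single_add_one]
          exact Algebra.subset_adjoin (Or.inr (Or.inl rfl))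
        · rw [Set.mem_singleton_iff] at hν
          subst hν
          rw [single_add_one]
          exact Algebra.subset_adjoin (Or.inr (Or.inr rfl))
      · refine mem_closure_Ti hne (hanti (Fin.le_def.mpr (by simp [hi']))) ?_ ?_ ?_ ?_
        · exact fun j hj1 hj2 =>
            ⟨Or.inl (Or.inl ⟨j, hj1, hj2, Or.inl rfl⟩),
             Or.inl (Or.inl ⟨j, hj1, hj2, Or.inr rfl⟩)⟩
        · exact Or.inl (Or.inr rfl)
        · exact Or.inr (Or.inl rfl)
        · exact Or.inr (Or.inr rfl)
    exact hspan hz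


lemma part2 (hn : 2 ≤ n) :
    Submodule.span F {l : AddMonoidAlgebra F (Fin n →₀ ℤ) |
      ∃ μ : Fin n →₀ ℤ, Antitone (⇑μ : Fin n → ℤ) ∧ l = AddMonoidAlgebra.single μ 1}
    = Subalgebra.toSubmodule (Algebra.adjoin F
      (Set.range (fun i : Fin n => AddMonoidAlgebra.single
        (∑ j ∈ Finset.univ.filter (fun j : Fin n => (j : ℕ) ≤ (i : ℕ)),
          Finsupp.single j (1 : ℤ)) (1 : F)) ∪
       {AddMonoidAlgebra.single (-(∑ j : Fin n, Finsupp.single j (1 : ℤ))) (1 : F)})) := by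
  apply le_antisymm
  · rw [Submodule.span_le]
    rintro l ⟨μ, hanti, rfl⟩
    refine single_mem_of_closure (T := Set.range (fun i : Fin n =>
        ∑ j ∈ Finset.univ.filter (fun j : Fin n => (j : ℕ) ≤ (i : ℕ)),
          Finsupp.single j (1 : ℤ)) ∪ {-(∑ j : Fin n, Finsupp.single j (1 : ℤ))})
      ?_ (mem_closure_Ty hn hanti ?_ ?_)
    · rintro ν (⟨i, rfl⟩ | hν)
      · exact Algebra.subset_adjoin (Or.inl ⟨i, rfl⟩)
      · rw [Set.mem_singleton_iff] at hν
        subst hν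
        exact Algebra.subset_adjoin (Or.inr rfl)
    · exact fun i => Or.inl ⟨i, rfl⟩
    · exact Or.inr rfl
  · intro zz hzz
    have hle : Algebra.adjoin F
        (Set.range (fun i : Fin n => AddMonoidAlgebra.single
          (∑ j ∈ Finset.univ.filter (fun j : Fin n => (j : ℕ) ≤ (i : ℕ)),
            Finsupp.single j (1 : ℤ)) (1 : F)) ∪
         {AddMonoidAlgebra.single (-(∑ j : Fin n, Finsupp.single j (1 : ℤ))) (1 : F)})
        ≤ expAlg F (Santi n) := by
      apply Algebra.adjoin_le
      rintro l (⟨i, rfl⟩ | hl)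
      · exact single_mem_expAlg (antitone_fexp i)
      · rw [Set.mem_singleton_iff] at hl
        subst hl
        exact single_mem_expAlg (antitone_neg_tot (n := n))
    exact mem_span_of (P := fun μ => Antitone (⇑μ : Fin n → ℤ))
      (fun μ hμ => hle hzz μ hμ)

end Stmt16Aux

/-- Inside the Laurent polynomial ring `F[x_1^{±1},…,x_n^{±1}]`, for each `1 ≤ i ≤ n−1`
let `A_i` be the subalgebra generated by `x_j^{±1}` for `j ∉ {i, i+1}`, by `x_i`, and by
`(x_i x_{i+1})^{±1}`. Then `∩_i A_i` equals the `F`-span of the monomials `x^μ` with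
`μ_1 ≥ μ_2 ≥ ⋯ ≥ μ_n`, which is the free polynomial-Laurent algebra
`F[y_1,…,y_{n−1},y_n^{±1}]` with `y_i = x_1⋯x_i` (the subalgebra generated by the `y_i`
together with `y_n^{-1}`). -/
theorem stmt16 {F : Type*} [Field F] {n : ℕ} (hn : 2 ≤ n) :
    let L := AddMonoidAlgebra F (Fin n →₀ ℤ)
    let x : Fin n → L := fun j => AddMonoidAlgebra.single (Finsupp.single j (1 : ℤ)) 1
    let xinv : Fin n → L := fun j => AddMonoidAlgebra.single (Finsupp.single j (-1 : ℤ)) 1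
    let A : ∀ i : Fin n, ((i : ℕ) + 1 < n) → Subalgebra F L := fun i h =>
      Algebra.adjoin F
        ({l | ∃ j : Fin n, j ≠ i ∧ j ≠ ⟨(i : ℕ) + 1, h⟩ ∧ (l = x j ∨ l = xinv j)} ∪
          {x i} ∪ {x i * x ⟨(i : ℕ) + 1, h⟩, xinv i * xinv ⟨(i : ℕ) + 1, h⟩})
    let domSpan : Submodule F L := Submodule.span F
      {l | ∃ μ : Fin n →₀ ℤ, Antitone (⇑μ : Fin n → ℤ) ∧ l = AddMonoidAlgebra.single μ 1}
    let y : Fin n → L := fun i =>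
      AddMonoidAlgebra.single
        (∑ j ∈ Finset.univ.filter (fun j : Fin n => (j : ℕ) ≤ (i : ℕ)),
          Finsupp.single j (1 : ℤ)) 1
    let yninv : L := AddMonoidAlgebra.single (-(∑ j : Fin n, Finsupp.single j (1 : ℤ))) 1
    (∀ z : L, (∀ (i : Fin n) (h : (i : ℕ) + 1 < n), z ∈ A i h) ↔ z ∈ domSpan) ∧
    domSpan = Subalgebra.toSubmodule (Algebra.adjoin F (Set.range y ∪ {yninv})) := by
  intro L x xinv A domSpan y yninv
  exact ⟨fun z => Stmt16Aux.part1 z, Stmt16Aux.part2 hn⟩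
end
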